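/- Douglas factorization for matrices: for square complex matrices A and B of the same size, A*A ≥ B*B (in the Loewner order) if and only if there exists a matrix F with F*F ≤ I such that B = F A. -/

import Mathlib

open Matrix
open scoped ComplexOrder

private lemma star_dot_self_eq (n : ℕ) (y : Fin n → ℂ) :
    dotProduct (star y) y = ((‖(WithLp.equiv 2 (Fin n → ℂ)).symm y‖ : ℂ)) ^ 2 := by
  have := inner_self_eq_norm_sq_to_K (𝕜 := ℂ) ((WithLp.equiv 2 (Fin n → ℂ)).symm y)
  exact (dotProduct_comm _ _).trans this

private lemma quad_form_eq (n : ℕ) (M : Matrix (Fin n) (Fin n) ℂ) (x : Fin n → ℂ) :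
    dotProduct (star x) ((Mᴴ * M) *ᵥ x) = dotProduct (star (M *ᵥ x)) (M *ᵥ x) := by
  rw [← mulVec_mulVec, dotProduct_mulVec, ← star_mulVec]

private lemma toEuclideanLin_mul (n : ℕ) (M N : Matrix (Fin n) (Fin n) ℂ) :
    Matrix.toEuclideanLin (M * N) =
      (Matrix.toEuclideanLin M).comp (Matrix.toEuclideanLin N) := by
  apply LinearMap.ext
  intro v
  simp [Matrix.toEuclideanLin_apply, mulVec_mulVec]

theorem douglas_factorization (n : ℕ) (A B : Matrix (Fin n) (Fin n) ℂ) :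
    (Aᴴ * A - Bᴴ * B).PosSemidef ↔
      ∃ F : Matrix (Fin n) (Fin n) ℂ, ((1 : Matrix (Fin n) (Fin n) ℂ) - Fᴴ * F).PosSemidef ∧
        B = F * A := by
  constructor
  · intro h
    set E := EuclideanSpace ℂ (Fin n)
    set f : E →ₗ[ℂ] E := Matrix.toEuclideanLin A with hf
    set g : E →ₗ[ℂ] E := Matrix.toEuclideanLin B with hg
    -- norm inequality
    have hfg : ∀ v : E, ‖g v‖ ≤ ‖f v‖ := by
      intro v
      have h2 := h.dotProduct_mulVec_nonneg ((WithLp.equiv 2 (Fin n → ℂ)) v)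
      rw [sub_mulVec, dotProduct_sub, quad_form_eq, quad_form_eq,
        star_dot_self_eq, star_dot_self_eq] at h2
      have hA' : (WithLp.equiv 2 (Fin n → ℂ)).symm
          (A *ᵥ (WithLp.equiv 2 (Fin n → ℂ)) v) = f v := rfl
      have hB' : (WithLp.equiv 2 (Fin n → ℂ)).symm
          (B *ᵥ (WithLp.equiv 2 (Fin n → ℂ)) v) = g v := rfl
      rw [hA', hB'] at h2
      have h3 : (0 : ℂ) ≤ ((‖f v‖ ^ 2 - ‖g v‖ ^ 2 : ℝ) : ℂ) := by push_cast; exact h2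
      rw [Complex.zero_le_real] at h3
      have h4 : ‖g v‖ ^ 2 ≤ ‖f v‖ ^ 2 := by linarith
      have := Real.sqrt_le_sqrt h4
      rwa [Real.sqrt_sq (norm_nonneg _), Real.sqrt_sq (norm_nonneg _)] at this
    have hker : ∀ v : E, f v = 0 → g v = 0 := by
      intro v hv
      have := hfg v
      rw [hv, norm_zero] at this
      exact norm_le_zero_iff.mp this
    -- construct the contraction
    set K := LinearMap.range f with hK
    obtain ⟨s, hs⟩ := LinearMap.exists_rightInverse_of_surjective
      (f.rangeRestrict) (LinearMap.range_rangeRestrict f)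
    have hs' : ∀ u : K, f (s u) = (u : E) := by
      intro u
      have := congrFun (congrArg DFunLike.coe hs) u
      simpa [LinearMap.rangeRestrict, Subtype.ext_iff] using congrArg Subtype.val this
    set P : E →ₗ[ℂ] K := (K.orthogonalProjectionOnto).toLinearMap with hP
    set Flin : E →ₗ[ℂ] E := g ∘ₗ (s ∘ₗ P) with hFlin
    have hPnorm : ∀ v : E, ‖(P v : E)‖ ≤ ‖v‖ := by
      intro v
      have h1 : ‖(P v : E)‖ = ‖K.orthogonalProjectionOnto v‖ := rfl
      rw [h1]
      calc ‖K.orthogonalProjectionOnto v‖ ≤ ‖K.orthogonalProjectionOnto‖ * ‖v‖ :=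
            (K.orthogonalProjectionOnto).le_opNorm v
        _ ≤ 1 * ‖v‖ := by
            exact mul_le_mul_of_nonneg_right (Submodule.orthogonalProjectionOnto_norm_le K) (norm_nonneg v)
        _ = ‖v‖ := one_mul _
    have hcontr : ∀ v : E, ‖Flin v‖ ≤ ‖v‖ := by
      intro v
      have h1 : Flin v = g (s (P v)) := rfl
      rw [h1]
      calc ‖g (s (P v))‖ ≤ ‖f (s (P v))‖ := hfg _
        _ = ‖(P v : E)‖ := by rw [hs' (P v)]
        _ ≤ ‖v‖ := hPnorm v
    have hfactor : ∀ v : E, Flin (f v) = g v := by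
      intro v
      have hmem : f v ∈ K := LinearMap.mem_range_self f v
      have h1 : P (f v) = ⟨f v, hmem⟩ := by
        exact Submodule.orthogonalProjectionOnto_mem_subspace_eq_self (⟨f v, hmem⟩ : K)
      have h2 : Flin (f v) = g (s ⟨f v, hmem⟩) := by
        simp only [hFlin, LinearMap.comp_apply, h1]
      rw [h2]
      have h3 : f (s ⟨f v, hmem⟩) = f v := hs' ⟨f v, hmem⟩
      have h4 : f (s ⟨f v, hmem⟩ - v) = 0 := by rw [map_sub, h3, sub_self]
      have h5 := hker _ h4
      rw [map_sub] at h5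
      exact sub_eq_zero.mp h5
    refine ⟨Matrix.toEuclideanLin.symm Flin, ?_, ?_⟩
    · set F : Matrix (Fin n) (Fin n) ℂ := Matrix.toEuclideanLin.symm Flin with hFdef
      have hFlin' : Matrix.toEuclideanLin F = Flin := Matrix.toEuclideanLin.apply_symm_apply Flin
      refine Matrix.PosSemidef.of_dotProduct_mulVec_nonneg ?_ ?_
      · unfold Matrix.IsHermitian
        simp [conjTranspose_sub, conjTranspose_mul]
      · intro x
        rw [sub_mulVec, dotProduct_sub, quad_form_eq, one_mulVec, star_dot_self_eq,
          star_dot_self_eq]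
        set v : E := (WithLp.equiv 2 (Fin n → ℂ)).symm x with hv
        have hFx : (WithLp.equiv 2 (Fin n → ℂ)).symm (F *ᵥ x) = Flin v := by
          rw [← hFlin']
          rfl
        rw [hFx]
        have h4 : ‖Flin v‖ ^ 2 ≤ ‖v‖ ^ 2 := by
          have := hcontr v
          have h0 := norm_nonneg (Flin v)
          nlinarith
        have h5 : ((‖Flin v‖ : ℂ)) ^ 2 ≤ ((‖v‖ : ℂ)) ^ 2 := by
          rw [← Complex.ofReal_pow, ← Complex.ofReal_pow, Complex.real_le_real]
          exact h4
        exact sub_nonneg.mpr h5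
    · set F : Matrix (Fin n) (Fin n) ℂ := Matrix.toEuclideanLin.symm Flin with hFdef
      have hFlin' : Matrix.toEuclideanLin F = Flin := Matrix.toEuclideanLin.apply_symm_apply Flin
      apply Matrix.toEuclideanLin.injective
      rw [toEuclideanLin_mul, hFlin', ← hf, ← hg]
      apply LinearMap.ext
      intro v
      exact (hfactor v).symm
  · rintro ⟨F, hF, rfl⟩
    have key : Aᴴ * ((1 : Matrix (Fin n) (Fin n) ℂ) - Fᴴ * F) * A
        = Aᴴ * A - (F * A)ᴴ * (F * A) := by
      rw [Matrix.mul_sub, Matrix.mul_one, Matrix.sub_mul, conjTranspose_mul]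
      noncomm_ring
    have := hF.conjTranspose_mul_mul_same A
    rwa [key] at this
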